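/- Let r >= 5 and let M be the symmetric matrix indexed by even-size subsets of {1,...,r} with M(S,T) = |S Δ T|/2 - 1 for S ≠ T and M(S,S) = 0, where Δ denotes symmetric difference. Then the matrix B = M - I satisfies B^2 = (q - 2^(r-3)) * J - 2^(r-3) * B, where q = (r^2 - 7r + 16) * 2^(r-5), I is the identity matrix and J is the all-ones matrix. -/
import Mathlib
open Finset


lemma prod_ite_inter {r : ℕ} (t A : Finset (Fin r)) :
    (∏ i ∈ t, (if i ∈ A then (-1:ℝ) else 1)) = (-1)^((t ∩ A).card) := by
  classical
  rw [← Finset.prod_filter_mul_prod_filter_not t (· ∈ A)]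
  have h1 : (∏ i ∈ t.filter (· ∈ A), (if i ∈ A then (-1:ℝ) else 1)) = (-1)^((t ∩ A).card) := by
    rw [Finset.prod_congr rfl (fun i hi => ?_), Finset.prod_const, Finset.filter_mem_eq_inter]
    simp at hi
    simp [hi.2]
  have h2 : (∏ i ∈ t.filter (¬ · ∈ A), (if i ∈ A then (-1:ℝ) else 1)) = 1 := by
    rw [Finset.prod_congr rfl (fun i hi => ?_), Finset.prod_const, one_pow]
    simp at hi
    simp [hi.2]
  rw [h1, h2, mul_one]

lemma sumF {r : ℕ} (A : Finset (Fin r)) :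
    ∑ S ∈ (univ : Finset (Fin r)).powerset, (-1:ℝ)^((S ∩ A).card)
      = if A = ∅ then 2^r else 0 := by
  classical
  have h := Finset.prod_add (fun i => if i ∈ A then (-1:ℝ) else 1) (fun _ => (1:ℝ))
    (univ : Finset (Fin r))
  simp only [Finset.prod_const, one_pow, mul_one] at h
  rw [Finset.sum_congr rfl (fun S _ => (prod_ite_inter S A).symm)]
  rw [← h]
  by_cases hA : A = ∅
  · simp [hA]
    norm_num
  · obtain ⟨a, ha⟩ := Finset.nonempty_iff_ne_empty.2 hA
    rw [if_neg hA]
    apply Finset.prod_eq_zero (Finset.mem_univ a)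
    simp [ha]

section
variable {r : ℕ}

lemma card_split (S A : Finset (Fin r)) : S.card = (S ∩ A).card + (S ∩ Aᶜ).card := by
  classical
  rw [← Finset.card_union_of_disjoint]
  · congr 1
    rw [← Finset.inter_union_distrib_left, Finset.union_compl, Finset.inter_univ]
  · exact Finset.disjoint_left.2 fun x hx hx' => by
      simp at hx hx'
      exact hx'.2 hx.2

lemma sumEvenF (A : Finset (Fin r)) :
    ∑ S : {S : Finset (Fin r) // Even S.card}, (-1:ℝ)^((S.1 ∩ A).card)
      = ((if A = ∅ then (2:ℝ)^r else 0) + (if Aᶜ = ∅ then (2:ℝ)^r else 0)) / 2 := by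
  classical
  have hsub : ∑ S : {S : Finset (Fin r) // Even S.card}, (-1:ℝ)^((S.1 ∩ A).card)
      = ∑ S ∈ (univ : Finset (Finset (Fin r))).filter (fun S => Even S.card),
          (-1:ℝ)^((S ∩ A).card) := by
    rw [Finset.sum_subtype (p := fun S : Finset (Fin r) => Even S.card) _ (fun S => by simp) (fun S => (-1:ℝ)^((S ∩ A).card))]
  rw [hsub]
  have key : (2:ℝ) * ∑ S ∈ (univ : Finset (Finset (Fin r))).filter (fun S => Even S.card),
      (-1:ℝ)^((S ∩ A).card)
      = (∑ S ∈ (univ : Finset (Finset (Fin r))), (-1:ℝ)^((S ∩ A).card))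
        + ∑ S ∈ (univ : Finset (Finset (Fin r))), (-1:ℝ)^((S ∩ Aᶜ).card) := by
    rw [Finset.sum_filter, Finset.mul_sum, ← Finset.sum_add_distrib]
    refine Finset.sum_congr rfl fun S _ => ?_
    have hc : (-1:ℝ)^(S.card) * (-1:ℝ)^((S ∩ A).card) = (-1:ℝ)^((S ∩ Aᶜ).card) := by
      rw [← pow_add, card_split S A]
      rw [show (S ∩ A).card + (S ∩ Aᶜ).card + (S ∩ A).card
          = 2 * (S ∩ A).card + (S ∩ Aᶜ).card by ring]
      rw [pow_add, pow_mul]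
      norm_num
    by_cases hS : Even S.card
    · rw [if_pos hS, ← hc, Even.neg_one_pow hS]
      ring
    · rw [if_neg hS, ← hc, Odd.neg_one_pow (Nat.not_even_iff_odd.1 hS)]
      ring
  have hF1 := sumF A
  have hF2 := sumF (Aᶜ)
  rw [Finset.powerset_univ] at hF1 hF2
  rw [hF1, hF2] at key
  linarith
end

section
variable {r : ℕ}

lemma cardE (hr : 5 ≤ r) :
    ∑ S : {S : Finset (Fin r) // Even S.card}, (1:ℝ) = 2^(r-1) := by
  have h := sumEvenF (r := r) ∅
  simp only [Finset.inter_empty, Finset.card_empty, pow_zero] at h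
  have hu : ((∅ : Finset (Fin r))ᶜ = ∅) = False := by
    simp only [Finset.compl_empty, eq_iff_iff, iff_false]
    have : Nonempty (Fin r) := ⟨⟨0, by omega⟩⟩
    exact Finset.univ_nonempty.ne_empty
  rw [h, if_pos trivial]
  simp only [hu, if_false]
  rw [show r = (r-1)+1 by omega]
  rw [pow_succ]
  ring_nf
  rw [show 1 + (r - 1) - 1 = r - 1 by omega]

lemma rowsum (hr : 5 ≤ r) (i : Fin r) :
    ∑ S : {S : Finset (Fin r) // Even S.card}, (-1:ℝ)^((S.1 ∩ {i}).card) = 0 := by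
  have h := sumEvenF (r := r) {i}
  rw [h, if_neg (by simp), if_neg]
  · norm_num
  · intro hc
    have : ({i} : Finset (Fin r)).card + ({i} : Finset (Fin r))ᶜ.card = r := by
      rw [Finset.card_add_card_compl]
      simp
    rw [hc] at this
    simp at this
    omega

lemma orth (hr : 5 ≤ r) (i j : Fin r) :
    ∑ S : {S : Finset (Fin r) // Even S.card},
        (-1:ℝ)^((S.1 ∩ {i}).card) * (-1:ℝ)^((S.1 ∩ {j}).card)
      = if i = j then 2^(r-1) else 0 := by
  by_cases hij : i = j
  · subst hij
    rw [if_pos rfl, ← cardE hr]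
    refine Finset.sum_congr rfl fun S _ => ?_
    rw [← pow_add, ← two_mul, pow_mul]
    norm_num
  · rw [if_neg hij]
    have hpair : ∀ S : Finset (Fin r),
        (-1:ℝ)^((S ∩ {i}).card) * (-1:ℝ)^((S ∩ {j}).card)
          = (-1:ℝ)^((S ∩ {i, j}).card) := by
      intro S
      rw [← pow_add]
      congr 1
      rw [show ({i, j} : Finset (Fin r)) = {i} ∪ {j} by rfl,
        Finset.inter_union_distrib_left, Finset.card_union_of_disjoint]
      exact Finset.disjoint_left.2 fun x hx hx' => by
        simp at hx hx'
        exact hij (hx.2 ▸ hx'.2 ▸ rfl)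
    rw [Finset.sum_congr rfl fun S _ => hpair S.1]
    have h := sumEvenF (r := r) {i, j}
    rw [h, if_neg (by simp), if_neg]
    · norm_num
    · intro hc
      have : ({i, j} : Finset (Fin r)).card + ({i, j} : Finset (Fin r))ᶜ.card = r := by
        rw [Finset.card_add_card_compl]
        simp
      rw [hc, Finset.card_empty, Finset.card_insert_of_notMem (by simp [hij]),
        Finset.card_singleton] at this
      omega
end

theorem typeD_matrix_quadratic (r : ℕ) (hr : 5 ≤ r)
    (M : Matrix {S : Finset (Fin r) // Even S.card} {S : Finset (Fin r) // Even S.card} ℝ)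
    (hM : ∀ S T, M S T = if S = T then 0 else ((symmDiff S.1 T.1).card : ℝ) / 2 - 1) :
    (M - 1) ^ 2 =
      (((r : ℝ) ^ 2 - 7 * r + 16) * 2 ^ (r - 5) - 2 ^ (r - 3)) •
          (Matrix.of fun _ _ => (1 : ℝ)) -
        (2 ^ (r - 3) : ℝ) • (M - 1) := by
  classical
  set ε : Fin r → {S : Finset (Fin r) // Even S.card} → ℝ :=
    fun i S => (-1:ℝ)^((S.1 ∩ {i}).card) with hεdef
  have hεpair : ∀ (i : Fin r) (S T : {S : Finset (Fin r) // Even S.card}),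
      ε i S * ε i T = if i ∈ symmDiff S.1 T.1 then (-1:ℝ) else 1 := by
    intro i S T
    by_cases hiS : i ∈ S.1 <;> by_cases hiT : i ∈ T.1 <;>
      simp [hεdef, Finset.inter_comm, Finset.singleton_inter_of_mem,
        Finset.singleton_inter_of_notMem, hiS, hiT, Finset.mem_symmDiff]
  have hq : ∀ S T : {S : Finset (Fin r) // Even S.card}, ∑ i, ε i S * ε i T
      = (r:ℝ) - 2 * ((symmDiff S.1 T.1).card : ℝ) := by
    intro S T
    rw [Finset.sum_congr rfl fun i _ => hεpair i S T]
    have h1 : ∀ i : Fin r, (if i ∈ symmDiff S.1 T.1 then (-1:ℝ) else 1)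
        = 1 - 2 * (if i ∈ symmDiff S.1 T.1 then (1:ℝ) else 0) := by
      intro i; split_ifs <;> ring
    rw [Finset.sum_congr rfl fun i _ => h1 i, Finset.sum_sub_distrib,
      ← Finset.mul_sum, Finset.sum_const, Finset.sum_boole]
    simp
  have hB : ∀ S T : {S : Finset (Fin r) // Even S.card}, (M - 1) S T
      = ((r:ℝ) - 4)/4 - (1/4) * ∑ i, ε i S * ε i T := by
    intro S T
    rw [hq]
    have hthis : (M - 1) S T = M S T - (if S = T then (1:ℝ) else 0) := by
      simp [Matrix.sub_apply, Matrix.one_apply]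
    rw [hthis, hM]
    by_cases hST : S = T
    · subst hST
      simp [symmDiff_self]
      ring
    · rw [if_neg hST, if_neg hST]
      ring
  ext S T
  rw [pow_two, Matrix.mul_apply]
  have step1 : ∑ U : {S : Finset (Fin r) // Even S.card}, (M - 1) S U * (M - 1) U T
      = (∑ U : {S : Finset (Fin r) // Even S.card}, (1:ℝ)) * (((r:ℝ) - 4)/4)^2
        - (((r:ℝ) - 4)/4) * (1/4)
            * (∑ U : {S : Finset (Fin r) // Even S.card}, ∑ i, ε i U * ε i T)
        - (((r:ℝ) - 4)/4) * (1/4)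
            * (∑ U : {S : Finset (Fin r) // Even S.card}, ∑ i, ε i S * ε i U)
        + (1/16) * ∑ U : {S : Finset (Fin r) // Even S.card},
            (∑ i, ε i S * ε i U) * (∑ j, ε j U * ε j T) := by
    rw [Finset.sum_congr rfl fun U _ => by rw [hB S U, hB U T]]
    rw [Finset.sum_mul, Finset.mul_sum, Finset.mul_sum, Finset.mul_sum,
      ← Finset.sum_sub_distrib, ← Finset.sum_sub_distrib, ← Finset.sum_add_distrib]
    refine Finset.sum_congr rfl fun U _ => ?_
    ring
  have hrow : ∀ X : {S : Finset (Fin r) // Even S.card},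
      ∑ U : {S : Finset (Fin r) // Even S.card}, ∑ i, ε i X * ε i U = 0 := by
    intro X
    rw [Finset.sum_comm]
    have inner0 : ∀ i : Fin r,
        ∑ U : {S : Finset (Fin r) // Even S.card}, ε i X * ε i U = 0 := by
      intro i
      rw [← Finset.mul_sum, rowsum hr i, mul_zero]
    rw [Finset.sum_congr rfl fun i _ => inner0 i]
    exact Finset.sum_const_zero
  have hrow' : ∀ X : {S : Finset (Fin r) // Even S.card},
      ∑ U : {S : Finset (Fin r) // Even S.card}, ∑ i, ε i U * ε i X = 0 := by
    intro X
    rw [Finset.sum_congr rfl fun U _ =>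
      Finset.sum_congr rfl fun i _ => mul_comm (ε i U) (ε i X)]
    exact hrow X
  have hsq : ∑ U : {S : Finset (Fin r) // Even S.card},
        (∑ i, ε i S * ε i U) * (∑ j, ε j U * ε j T)
      = 2^(r-1) * ∑ i, ε i S * ε i T := by
    have expand : ∀ U : {S : Finset (Fin r) // Even S.card},
        (∑ i, ε i S * ε i U) * (∑ j, ε j U * ε j T)
        = ∑ i, ∑ j, (ε i S * ε j T) * (ε i U * ε j U) := by
      intro U
      rw [Finset.sum_mul_sum]
      exact Finset.sum_congr rfl fun i _ => Finset.sum_congr rfl fun j _ => by ring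
    rw [Finset.sum_congr rfl fun U _ => expand U, Finset.sum_comm]
    have swap2 : ∀ i : Fin r,
        ∑ U : {S : Finset (Fin r) // Even S.card}, ∑ j, (ε i S * ε j T) * (ε i U * ε j U)
        = ∑ j, ∑ U : {S : Finset (Fin r) // Even S.card}, (ε i S * ε j T) * (ε i U * ε j U) :=
      fun i => Finset.sum_comm
    rw [Finset.sum_congr rfl fun i _ => swap2 i]
    have inner : ∀ i j : Fin r,
        ∑ U : {S : Finset (Fin r) // Even S.card}, (ε i S * ε j T) * (ε i U * ε j U)
        = (ε i S * ε j T) * (if i = j then (2:ℝ)^(r-1) else 0) := by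
      intro i j
      rw [← Finset.mul_sum, orth hr i j]
    rw [Finset.sum_congr rfl fun i _ => Finset.sum_congr rfl fun j _ => inner i j]
    have last : ∀ i : Fin r,
        ∑ j, (ε i S * ε j T) * (if i = j then (2:ℝ)^(r-1) else 0)
        = 2^(r-1) * (ε i S * ε i T) := by
      intro i
      rw [Finset.sum_eq_single i]
      · rw [if_pos rfl]; ring
      · intro j _ hj
        rw [if_neg (fun h => hj h.symm), mul_zero]
      · intro h
        exact absurd (Finset.mem_univ i) h
    rw [Finset.sum_congr rfl fun i _ => last i, ← Finset.mul_sum]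
  rw [step1, cardE hr, hrow' T, hrow S, hsq]
  have hRHS : (((((r : ℝ) ^ 2 - 7 * r + 16) * 2 ^ (r - 5) - 2 ^ (r - 3)) •
          (Matrix.of fun _ _ => (1 : ℝ)) -
        (2 ^ (r - 3) : ℝ) • (M - 1) :
        Matrix {S : Finset (Fin r) // Even S.card} {S : Finset (Fin r) // Even S.card} ℝ)) S T
      = (((r : ℝ) ^ 2 - 7 * r + 16) * 2 ^ (r - 5) - 2 ^ (r - 3))
        - (2 ^ (r - 3) : ℝ) * (((r:ℝ) - 4)/4 - (1/4) * ∑ i, ε i S * ε i T) := by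
    rw [Matrix.sub_apply, Matrix.smul_apply, Matrix.smul_apply, hB S T]
    simp [smul_eq_mul]
  rw [hRHS]
  have h1 : (2:ℝ)^(r-1) = 2^(r-5) * 16 := by
    rw [show r - 1 = (r-5) + 4 by omega, pow_add]
    norm_num
  have h3 : (2:ℝ)^(r-3) = 2^(r-5) * 4 := by
    rw [show r - 3 = (r-5) + 2 by omega, pow_add]
    norm_num
  rw [h1, h3]
  ring
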